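/- Let d ≥ 1 and let X ∈ ℝ^{d×d} be invertible. Then the function f_D is (Fréchet) differentiable at X and its gradient with respect to the Frobenius inner product is ∇f_D(X) = X − X^{−⊤}X^{−1}X^{−⊤}; that is, the derivative of f_D at X is the linear map H ↦ trace((X − X^{−⊤}X^{−1}X^{−⊤})ᵀ H). -/

import Mathlib

set_option maxHeartbeats 1000000


open Matrix

attribute [local instance] Matrix.frobeniusNormedAddCommGroup Matrix.frobeniusNormedSpace

/-- The defining function of the symmetric Dirichlet energy:
`f_D(X) = (1/2)(‖X‖² + ‖X⁻¹‖²)`, where `‖·‖` is the Frobenius norm,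
so `‖X‖² = trace(Xᵀ X)`. -/
noncomputable def fD {d : ℕ} (X : Matrix (Fin d) (Fin d) ℝ) : ℝ :=
  (1 / 2) * (Matrix.trace (Xᵀ * X) + Matrix.trace ((X⁻¹)ᵀ * X⁻¹))

attribute [local instance] Matrix.frobeniusNormedRing Matrix.frobeniusNormedAlgebra

/-- for invertible `X`, `f_D` is Fréchet differentiable at `X` and its
derivative is the linear map `H ↦ trace((X − X⁻ᵀ X⁻¹ X⁻ᵀ)ᵀ H)`, i.e. its Frobenius
gradient is `X − X⁻ᵀ X⁻¹ X⁻ᵀ`. -/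
theorem fD_hasFDerivAt (d : ℕ) (hd : 1 ≤ d)
    (X : Matrix (Fin d) (Fin d) ℝ) (hX : IsUnit X.det) :
    ∃ L : Matrix (Fin d) (Fin d) ℝ →L[ℝ] ℝ,
      HasFDerivAt fD L X ∧
      ∀ H : Matrix (Fin d) (Fin d) ℝ,
        L H = Matrix.trace ((X - (X⁻¹)ᵀ * X⁻¹ * (X⁻¹)ᵀ)ᵀ * H) := by
  classical
  -- transpose as a continuous linear map
  let T : Matrix (Fin d) (Fin d) ℝ →L[ℝ] Matrix (Fin d) (Fin d) ℝ :=
    LinearMap.toContinuousLinearMap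
      ((Matrix.transposeLinearEquiv (Fin d) (Fin d) ℝ ℝ).toLinearMap)
  have hTapp : ∀ Y : Matrix (Fin d) (Fin d) ℝ, T Y = Yᵀ := fun Y => rfl
  -- trace as a continuous linear map
  let tr : Matrix (Fin d) (Fin d) ℝ →L[ℝ] ℝ :=
    LinearMap.toContinuousLinearMap (Matrix.traceLinearMap (Fin d) ℝ ℝ)
  have htrapp : ∀ Y : Matrix (Fin d) (Fin d) ℝ, tr Y = Matrix.trace Y := fun Y => rfl
  have hT : HasFDerivAt (fun Y : Matrix (Fin d) (Fin d) ℝ => Yᵀ) T X := T.hasFDerivAt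
  -- derivative of Y ↦ Yᵀ * Y
  have h1 : HasFDerivAt (fun Y : Matrix (Fin d) (Fin d) ℝ => Yᵀ * Y)
      ((fun Y : Matrix (Fin d) (Fin d) ℝ => Yᵀ) X •
        ContinuousLinearMap.id ℝ (Matrix (Fin d) (Fin d) ℝ) +
        T.smulRight (_root_.id X)) X :=
    hT.mul' (hasFDerivAt_id X)
  -- derivative of inversion
  have hXunit : IsUnit X := (Matrix.isUnit_iff_isUnit_det X).mpr hX
  obtain ⟨u, hu⟩ := hXunit
  have huinv : (↑u⁻¹ : Matrix (Fin d) (Fin d) ℝ) = X⁻¹ := by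
    rw [Matrix.nonsing_inv_eq_ringInverse, ← hu, Ring.inverse_unit]
  have hinv : HasFDerivAt (fun Y : Matrix (Fin d) (Fin d) ℝ => Y⁻¹)
      (-ContinuousLinearMap.mulLeftRight ℝ (Matrix (Fin d) (Fin d) ℝ) X⁻¹ X⁻¹) X := by
    have h := hasFDerivAt_ringInverse (𝕜 := ℝ) u
    rw [hu, huinv] at h
    have heq : (Ring.inverse : Matrix (Fin d) (Fin d) ℝ → Matrix (Fin d) (Fin d) ℝ)
        = fun Y : Matrix (Fin d) (Fin d) ℝ => Y⁻¹ := by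
      funext Y; exact (Matrix.nonsing_inv_eq_ringInverse Y).symm
    rwa [heq] at h
  set D : Matrix (Fin d) (Fin d) ℝ →L[ℝ] Matrix (Fin d) (Fin d) ℝ :=
    -ContinuousLinearMap.mulLeftRight ℝ (Matrix (Fin d) (Fin d) ℝ) X⁻¹ X⁻¹ with hD
  have hDapp : ∀ H : Matrix (Fin d) (Fin d) ℝ, D H = -(X⁻¹ * H * X⁻¹) := by
    intro H
    simp [hD, ContinuousLinearMap.mulLeftRight_apply]
    rfl
  -- derivative of Y ↦ (Y⁻¹)ᵀ
  have hTinv : HasFDerivAt (fun Y : Matrix (Fin d) (Fin d) ℝ => (Y⁻¹)ᵀ) (T.comp D) X :=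
    T.hasFDerivAt.comp X hinv
  -- derivative of Y ↦ (Y⁻¹)ᵀ * Y⁻¹
  have h2 : HasFDerivAt (fun Y : Matrix (Fin d) (Fin d) ℝ => (Y⁻¹)ᵀ * Y⁻¹)
      ((fun Y : Matrix (Fin d) (Fin d) ℝ => (Y⁻¹)ᵀ) X • D +
        (T.comp D).smulRight ((fun Y : Matrix (Fin d) (Fin d) ℝ => Y⁻¹) X)) X :=
    hTinv.mul' hinv
  -- assemble
  have h3 := ((tr.hasFDerivAt.comp X h1).add (tr.hasFDerivAt.comp X h2)).const_mul
    ((1 : ℝ) / 2)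
  refine ⟨((1:ℝ)/2) •
      (tr.comp ((fun Y : Matrix (Fin d) (Fin d) ℝ => Yᵀ) X •
          ContinuousLinearMap.id ℝ (Matrix (Fin d) (Fin d) ℝ) + T.smulRight (_root_.id X)) +
        tr.comp ((fun Y : Matrix (Fin d) (Fin d) ℝ => (Y⁻¹)ᵀ) X • D +
          (T.comp D).smulRight ((fun Y : Matrix (Fin d) (Fin d) ℝ => Y⁻¹) X))), ?_, ?_⟩
  · convert h3 using 1
    all_goals rfl
  · intro H
    simp only [ContinuousLinearMap.smul_apply, ContinuousLinearMap.add_apply,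
      ContinuousLinearMap.comp_apply, ContinuousLinearMap.smulRight_apply,
      ContinuousLinearMap.coe_smul', Pi.smul_apply, ContinuousLinearMap.id_apply,
      smul_eq_mul, _root_.id]
    rw [htrapp, htrapp, hTapp, hDapp, hTapp]
    have e1 : Matrix.trace (Hᵀ * X) = Matrix.trace (Xᵀ * H) := by
      rw [← Matrix.trace_transpose (Hᵀ * X), Matrix.transpose_mul, Matrix.transpose_transpose]
    have e2 : Matrix.trace ((-(X⁻¹ * H * X⁻¹))ᵀ * X⁻¹)
        = Matrix.trace ((X⁻¹)ᵀ * -(X⁻¹ * H * X⁻¹)) := by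
      rw [← Matrix.trace_transpose ((-(X⁻¹ * H * X⁻¹))ᵀ * X⁻¹), Matrix.transpose_mul,
        Matrix.transpose_transpose]
    have e3 : Matrix.trace ((X⁻¹)ᵀ * -(X⁻¹ * H * X⁻¹))
        = -Matrix.trace ((X⁻¹ * (X⁻¹)ᵀ * X⁻¹) * H) := by
      rw [Matrix.mul_neg, Matrix.trace_neg]
      congr 1
      rw [show (X⁻¹)ᵀ * (X⁻¹ * H * X⁻¹) = ((X⁻¹)ᵀ * X⁻¹ * H) * X⁻¹ by
        simp only [Matrix.mul_assoc]]
      rw [Matrix.trace_mul_comm]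
      congr 1
      simp only [Matrix.mul_assoc]
    have e4 : Matrix.trace ((X - (X⁻¹)ᵀ * X⁻¹ * (X⁻¹)ᵀ)ᵀ * H)
        = Matrix.trace (Xᵀ * H) - Matrix.trace ((X⁻¹ * (X⁻¹)ᵀ * X⁻¹) * H) := by
      rw [Matrix.transpose_sub, Matrix.sub_mul, Matrix.trace_sub]
      congr 2
      simp [Matrix.transpose_mul, Matrix.mul_assoc]
    rw [Matrix.trace_add, Matrix.trace_add, e1, e2, e3, e4]
    ring
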